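/- Let n, m be positive integers with gcd(n,m) = 1, and let P be a free (n,m)-path. Then exactly one cyclic rotation of P is an (n,m)-Dyck path; that is, the equivalence class [P] contains a unique (n,m)-Dyck path. -/

import Mathlib

/-- A free `(n,m)`-path: a word over `{U, D}` (here `true` = `U` = step `(0,1)`,
`false` = `D` = step `(1,0)`) with exactly `m` letters `U` and `n` letters `D`. -/
def IsFreePath (n m : ℕ) (w : List Bool) : Prop :=
  w.count true = m ∧ w.count false = n

/-- An `(n,m)`-Dyck path: a free `(n,m)`-path that never goes below the line
`y = (m/n)x`, i.e. every prefix with `u` letters `U` and `d` letters `D`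
satisfies `n·u ≥ m·d`. -/
def IsDyckPath (n m : ℕ) (w : List Bool) : Prop :=
  IsFreePath n m w ∧ ∀ p : List Bool, p <+: w → m * p.count false ≤ n * p.count true

namespace Stmt7Aux

/-- Height of a word: `n·(#U) − m·(#D)`. -/
def H (n m : ℕ) (w : List Bool) : ℤ :=
  (n : ℤ) * w.count true - (m : ℤ) * w.count false

lemma H_append (n m : ℕ) (a b : List Bool) :
    H n m (a ++ b) = H n m a + H n m b := by
  simp [H, List.count_append]; ring

lemma H_nonneg_iff (n m : ℕ) (p : List Bool) :
    m * p.count false ≤ n * p.count true ↔ 0 ≤ H n m p := by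
  rw [H, sub_nonneg]
  exact_mod_cast Iff.rfl

lemma count_true_add_count_false (w : List Bool) :
    w.count true + w.count false = w.length := by
  induction w with
  | nil => rfl
  | cons a l ih => cases a <;> simp [List.count_cons] <;> omega

/-- Height of a prefix of length `i`. -/
def g (n m : ℕ) (P : List Bool) (i : ℕ) : ℤ := H n m (P.take i)

lemma g_zero (n m : ℕ) (P : List Bool) : g n m P 0 = 0 := by
  simp [g, H]

lemma g_mod (n m : ℕ) (P : List Bool) :
    ∀ i, i ≤ P.length → ((g n m P i : ZMod (n + m)) = (n : ZMod (n + m)) * i) := by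
  intro i
  induction i with
  | zero => intro _; simp [g_zero]
  | succ i ih =>
    intro hi
    have hi' : i < P.length := hi
    have hsucc : P.take (i + 1) = P.take i ++ [P[i]] := by
      rw [List.take_succ, List.getElem?_eq_getElem hi']
      rfl
    have hg : g n m P (i + 1) = g n m P i + H n m [P[i]] := by
      rw [g, hsucc, H_append]; rfl
    have key : ((H n m [P[i]] : ℤ) : ZMod (n + m)) = (n : ZMod (n + m)) := by
      have hz : ((n : ZMod (n + m)) + (m : ZMod (n + m))) = 0 := by
        have : (((n + m : ℕ) : ZMod (n + m))) = 0 := ZMod.natCast_self _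
        push_cast at this
        exact this
      cases hb : P[i]
      · have hH : H n m [false] = -(m : ℤ) := by simp [H]
        rw [hH]; push_cast; linear_combination -hz
      · have hH : H n m [true] = (n : ℤ) := by simp [H]
        rw [hH]; push_cast; ring
    calc ((g n m P (i + 1) : ℤ) : ZMod (n + m))
        = ((g n m P i : ℤ) : ZMod (n + m)) + ((H n m [P[i]] : ℤ) : ZMod (n + m)) := by
          rw [hg]; push_cast; ring
      _ = (n : ZMod (n + m)) * i + n := by rw [ih (le_of_lt hi'), key]
      _ = (n : ZMod (n + m)) * ((i : ℕ) + 1 : ℕ) := by push_cast; ring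

lemma g_inj (n m : ℕ) (hn : 0 < n) (hm : 0 < m) (h : Nat.gcd n m = 1)
    (P : List Bool) (hL : P.length = n + m) {i j : ℕ}
    (hi : i < n + m) (hj : j < n + m) (hij : g n m P i = g n m P j) : i = j := by
  haveI : NeZero (n + m) := ⟨by omega⟩
  have h1 := g_mod n m P i (by omega)
  have h2 := g_mod n m P j (by omega)
  rw [hij, h2] at h1
  have hu : IsUnit (n : ZMod (n + m)) := by
    rw [ZMod.isUnit_iff_coprime]
    have hc : Nat.Coprime n m := h
    rw [Nat.add_comm]
    exact Nat.coprime_add_self_right.mpr hc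
  have hcast : (i : ZMod (n + m)) = (j : ZMod (n + m)) := hu.mul_left_cancel h1.symm
  have hmod := (ZMod.natCast_eq_natCast_iff i j (n + m)).mp hcast
  have heq : i % (n + m) = j % (n + m) := hmod
  rwa [Nat.mod_eq_of_lt hi, Nat.mod_eq_of_lt hj] at heq

lemma H_take_rotate (n m : ℕ) (P : List Bool) {j k : ℕ}
    (hj : j ≤ P.length) (hk : k ≤ P.length) :
    H n m ((P.rotate j).take k)
      = (g n m P (j + k) - g n m P j) + g n m P (k - (P.length - j)) := by
  rw [List.rotate_eq_drop_append_take hj, List.take_append, H_append]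
  have h1 : H n m ((P.drop j).take k) = g n m P (j + k) - g n m P j := by
    have ht : P.take (j + k) = P.take j ++ (P.drop j).take k := List.take_add
    have : g n m P (j + k) = g n m P j + H n m ((P.drop j).take k) := by
      rw [g, ht, H_append]; rfl
    linarith
  have h2 : (P.take j).take (k - (P.drop j).length) = P.take (k - (P.length - j)) := by
    rw [List.length_drop, List.take_take, min_eq_left (by omega)]
  rw [h1, h2]
  rfl

end Stmt7Aux

/-- If `gcd(n,m) = 1`, then among the cyclic rotations of a free `(n,m)`-path `P`
there is exactly one `(n,m)`-Dyck path. -/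
theorem stmt7 (n m : ℕ) (hn : 0 < n) (hm : 0 < m) (h : Nat.gcd n m = 1)
    (P : List Bool) (hP : IsFreePath n m P) :
    ∃! Q : List Bool, (∃ i : ℕ, Q = P.rotate i) ∧ IsDyckPath n m Q := by
  classical
  obtain ⟨hPt, hPf⟩ := hP
  have hL : P.length = n + m := by
    have := Stmt7Aux.count_true_add_count_false P; omega
  have hLpos : 0 < n + m := by omega
  -- the minimum of g on [0, n+m)
  obtain ⟨i₀, hi₀mem, hi₀min⟩ :=
    Finset.exists_min_image (Finset.range (n + m)) (Stmt7Aux.g n m P)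
      ⟨0, Finset.mem_range.mpr hLpos⟩
  rw [Finset.mem_range] at hi₀mem
  have hmin' : ∀ x, x < n + m → Stmt7Aux.g n m P i₀ ≤ Stmt7Aux.g n m P x := fun x hx =>
    hi₀min x (Finset.mem_range.mpr hx)
  have hg0 : Stmt7Aux.g n m P 0 = 0 := Stmt7Aux.g_zero n m P
  have hgL : ∀ x, n + m ≤ x → Stmt7Aux.g n m P x = 0 := by
    intro x hx
    unfold Stmt7Aux.g
    rw [List.take_of_length_le (by omega)]
    unfold Stmt7Aux.H
    rw [hPt, hPf]
    ring
  -- the key characterization: for j < n+m, rotate j is nonneg on prefixes iff j is a minimum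
  have key : ∀ j, j < n + m →
      ((∀ p : List Bool, p <+: P.rotate j → m * p.count false ≤ n * p.count true) ↔
        (∀ x, x < n + m → Stmt7Aux.g n m P j ≤ Stmt7Aux.g n m P x)) := by
    intro j hj
    have hjle : j ≤ P.length := by omega
    have hlenrot : (P.rotate j).length = n + m := by rw [List.length_rotate, hL]
    constructor
    · intro hd x hx
      by_cases hxj : j ≤ x
      · -- prefix of length x - j
        have hk : x - j ≤ P.length := by omega
        have hpre := hd ((P.rotate j).take (x - j)) (List.take_prefix _ _)
        rw [Stmt7Aux.H_nonneg_iff, Stmt7Aux.H_take_rotate n m P hjle hk] at hpre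
        have e1 : j + (x - j) = x := by omega
        have e2 : x - j - (P.length - j) = 0 := by omega
        rw [e1, e2, hg0] at hpre
        linarith
      · -- prefix of length (n+m) - j + x
        push_neg at hxj
        have hk : (n + m) - j + x ≤ P.length := by omega
        have hpre := hd ((P.rotate j).take ((n + m) - j + x)) (List.take_prefix _ _)
        rw [Stmt7Aux.H_nonneg_iff, Stmt7Aux.H_take_rotate n m P hjle hk] at hpre
        have e1 : Stmt7Aux.g n m P (j + ((n + m) - j + x)) = 0 := hgL _ (by omega)
        have e2 : (n + m) - j + x - (P.length - j) = x := by omega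
        rw [e1, e2] at hpre
        linarith
    · intro hminj p hp
      have hplen : p.length ≤ n + m := by
        have := hp.length_le
        rw [hlenrot] at this
        exact this
      rw [List.prefix_iff_eq_take] at hp
      rw [Stmt7Aux.H_nonneg_iff, hp,
        Stmt7Aux.H_take_rotate n m P hjle (by omega)]
      have hb1 : Stmt7Aux.g n m P j ≤ Stmt7Aux.g n m P (j + p.length) := by
        by_cases hc : j + p.length < n + m
        · exact hminj _ hc
        · rw [hgL (j + p.length) (by omega)]
          have := hminj 0 hLpos
          rw [hg0] at this
          linarith
      by_cases hc : p.length ≤ (n + m) - j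
      · have e2 : p.length - (P.length - j) = 0 := by omega
        rw [e2, hg0]
        linarith
      · have e1 : Stmt7Aux.g n m P (j + p.length) = 0 := hgL _ (by omega)
        have hb2 : Stmt7Aux.g n m P j ≤ Stmt7Aux.g n m P (p.length - (P.length - j)) := by
          by_cases hc2 : p.length - (P.length - j) < n + m
          · exact hminj _ hc2
          · rw [hgL (p.length - (P.length - j)) (by omega)]
            have := hminj 0 hLpos
            rw [hg0] at this
            linarith
        rw [e1]
        linarith
  refine ⟨P.rotate i₀, ⟨⟨i₀, rfl⟩, ⟨⟨?_, ?_⟩, ?_⟩⟩, ?_⟩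
  · rw [(List.rotate_perm P i₀).count_eq, hPt]
  · rw [(List.rotate_perm P i₀).count_eq, hPf]
  · exact (key i₀ hi₀mem).mpr (fun x hx => hmin' x hx)
  · rintro Q ⟨⟨i, rfl⟩, ⟨_, hdy⟩⟩
    have hrw : P.rotate i = P.rotate (i % (n + m)) := by
      rw [← hL, List.rotate_mod]
    set j := i % (n + m) with hjdef
    have hj : j < n + m := Nat.mod_lt _ hLpos
    rw [hrw] at hdy ⊢
    have hminj := (key j hj).mp hdy
    have hji₀ : j = i₀ := by
      refine Stmt7Aux.g_inj n m hn hm h P hL hj hi₀mem ?_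
      exact le_antisymm (hminj i₀ hi₀mem) (hmin' j hj)
    rw [hji₀]
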